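/- Cheeger-type upper bound: for a reversible Markov chain with conductance h and second-largest eigenvalue μ₂, it holds that h²/2 ≤ 1 − μ₂. -/

import Mathlib

open Matrix Finset MeasureTheory

lemma indicator_int (a b c : ℝ) :
    Integrable ((Set.Ico a b).indicator (fun _ => c)) := by
  rw [integrable_indicator_iff measurableSet_Ico]
  exact integrableOn_const (by rw [Real.volume_Ico]; exact ENNReal.ofReal_ne_top)

lemma indicator_intgl (a b c : ℝ) :
    ∫ t, (Set.Ico a b).indicator (fun _ => c) t = max (b - a) 0 * c := by
  rw [MeasureTheory.integral_indicator_const _ measurableSet_Ico, measureReal_def, Real.volume_Ico,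
    ENNReal.toReal_ofReal', smul_eq_mul]

lemma sumQ_left {n : ℕ} (π : Fin n → ℝ) (P : Matrix (Fin n) (Fin n) ℝ)
    (hProw : ∀ i, ∑ j, P i j = 1) (w : Fin n → ℝ) :
    ∑ x, ∑ y, π x * P x y * w x = ∑ x, π x * w x := by
  refine Finset.sum_congr rfl fun x _ => ?_
  calc ∑ y, π x * P x y * w x = (π x * w x) * ∑ y, P x y := by
        rw [Finset.mul_sum]; exact Finset.sum_congr rfl fun y _ => by ring
    _ = π x * w x := by rw [hProw x, mul_one]

lemma sumQ_right {n : ℕ} (π : Fin n → ℝ) (P : Matrix (Fin n) (Fin n) ℝ)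
    (hcol : ∀ y, ∑ x, π x * P x y = π y) (w : Fin n → ℝ) :
    ∑ x, ∑ y, π x * P x y * w y = ∑ x, π x * w x := by
  rw [Finset.sum_comm]
  refine Finset.sum_congr rfl fun y _ => ?_
  calc ∑ x, π x * P x y * w y = (∑ x, π x * P x y) * w y := by rw [Finset.sum_mul]
    _ = π y * w y := by rw [hcol y]

lemma dirichlet_eq {n : ℕ} (π : Fin n → ℝ) (P : Matrix (Fin n) (Fin n) ℝ)
    (hProw : ∀ i, ∑ j, P i j = 1)
    (hcol : ∀ y, ∑ x, π x * P x y = π y)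
    (g : Fin n → ℝ) :
    ∑ x, ∑ y, π x * P x y * (g x - g y) ^ 2
      = 2 * ∑ x, π x * (g x * (g x - P.mulVec g x)) := by
  have e3 : ∑ x, ∑ y, π x * P x y * (g x * g y) = ∑ x, π x * (g x * P.mulVec g x) := by
    refine Finset.sum_congr rfl fun x _ => ?_
    simp only [Matrix.mulVec, dotProduct]
    rw [Finset.mul_sum, Finset.mul_sum]
    exact Finset.sum_congr rfl fun y _ => by ring
  have expand : ∀ x ∈ (univ : Finset (Fin n)), ∑ y, π x * P x y * (g x - g y) ^ 2
      = ((∑ y, π x * P x y * g x ^ 2) + (∑ y, π x * P x y * g y ^ 2))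
        - 2 * ∑ y, π x * P x y * (g x * g y) := by
    intro x _
    rw [Finset.mul_sum, ← Finset.sum_add_distrib, ← Finset.sum_sub_distrib]
    exact Finset.sum_congr rfl fun y _ => by ring
  rw [Finset.sum_congr rfl expand, Finset.sum_sub_distrib, Finset.sum_add_distrib,
    sumQ_left π P hProw (fun x => g x ^ 2), sumQ_right π P hcol (fun x => g x ^ 2),
    ← Finset.mul_sum, e3]
  have h4 : ∑ x, π x * (g x * (g x - P.mulVec g x))
      = ∑ x, π x * g x ^ 2 - ∑ x, π x * (g x * P.mulVec g x) := by
    rw [← Finset.sum_sub_distrib]; exact Finset.sum_congr rfl fun x _ => by ring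
  rw [h4]; ring

lemma coarea {n : ℕ} (π : Fin n → ℝ) (P : Matrix (Fin n) (Fin n) ℝ)
    (hπpos : ∀ i, 0 < π i) (hPnn : ∀ i j, 0 ≤ P i j)
    (h : ℝ) (g : Fin n → ℝ) (hg0 : ∀ x, 0 ≤ g x)
    (hhalf : ∑ i ∈ Finset.univ.filter (fun z => 0 < g z), π i ≤ 1/2)
    (hlb : ∀ T : Finset (Fin n), T.Nonempty → (∑ i ∈ T, π i) ≤ 1/2 →
        h * ∑ i ∈ T, π i ≤ ∑ i ∈ T, ∑ j ∈ Tᶜ, π i * P i j) :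
    h * ∑ z, π z * g z ^ 2 ≤ ∑ x, ∑ y, max (g x ^ 2 - g y ^ 2) 0 * (π x * P x y) := by
  set ψ : ℝ → ℝ := fun t => ∑ z, (Set.Ico 0 (g z ^ 2)).indicator (fun _ => π z) t with hψdef
  set φ : ℝ → ℝ := fun t => ∑ x, ∑ y,
    (Set.Ico (g y ^ 2) (g x ^ 2)).indicator (fun _ => π x * P x y) t with hφdef
  have intψ : Integrable ψ := integrable_finset_sum _ (fun z _ => indicator_int _ _ _)
  have intφ : Integrable φ :=
    integrable_finset_sum _ (fun x _ => integrable_finset_sum _ (fun y _ => indicator_int _ _ _))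
  have key : ∀ t, h * ψ t ≤ φ t := by
    intro t
    by_cases ht : 0 ≤ t
    · set T := Finset.univ.filter (fun z => t < g z ^ 2) with hTdef
      have hψt : ψ t = ∑ z ∈ T, π z := by
        rw [hψdef, Finset.sum_filter]
        refine Finset.sum_congr rfl (fun z _ => ?_)
        rw [Set.indicator_apply]
        simp only [Set.mem_Ico, ht, true_and]
      have hφt : φ t = ∑ x ∈ T, ∑ y ∈ Tᶜ, π x * P x y := by
        simp only [hφdef]
        rw [← Finset.sum_subset (Finset.subset_univ T)]
        · refine Finset.sum_congr rfl (fun x hx => ?_)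
          rw [← Finset.sum_subset (Finset.subset_univ Tᶜ)]
          · refine Finset.sum_congr rfl (fun y hy => ?_)
            rw [Set.indicator_apply, if_pos]
            refine Set.mem_Ico.2 ⟨?_, (Finset.mem_filter.1 hx).2⟩
            have := Finset.mem_compl.1 hy
            simp only [hTdef, Finset.mem_filter, Finset.mem_univ, true_and] at this
            linarith [not_lt.1 this]
          · intro y _ hy
            rw [Set.indicator_apply, if_neg]
            intro hmem
            exact hy (Finset.mem_compl.2 (by
              simp only [hTdef, Finset.mem_filter, Finset.mem_univ, true_and]
              exact not_lt.2 (Set.mem_Ico.1 hmem).1))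
        · intro x _ hx
          refine Finset.sum_eq_zero (fun y _ => ?_)
          rw [Set.indicator_apply, if_neg]
          intro hmem
          simp only [hTdef, Finset.mem_filter, Finset.mem_univ, true_and] at hx
          exact hx (Set.mem_Ico.1 hmem).2
      rw [hψt, hφt]
      rcases T.eq_empty_or_nonempty with hTe | hTne
      · simp [hTe]
      · refine hlb T hTne (le_trans ?_ hhalf)
        refine Finset.sum_le_sum_of_subset_of_nonneg ?_ (fun i _ _ => (hπpos i).le)
        intro z hz
        simp only [hTdef, Finset.mem_filter, Finset.mem_univ, true_and] at hz ⊢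
        have : 0 < g z ^ 2 := lt_of_le_of_lt ht hz
        exact lt_of_le_of_ne (hg0 z) (fun he => by simp [← he] at this)
    · have hψt : ψ t = 0 := Finset.sum_eq_zero (fun z _ => by
        rw [Set.indicator_apply, if_neg (fun hm => ht (Set.mem_Ico.1 hm).1)])
      have hφt : φ t = 0 := Finset.sum_eq_zero (fun x _ => Finset.sum_eq_zero (fun y _ => by
        rw [Set.indicator_apply,
          if_neg (fun hm => ht (le_trans (sq_nonneg _) (Set.mem_Ico.1 hm).1))]))
      rw [hψt, hφt, mul_zero]
  have hintψ : ∫ t, ψ t = ∑ z, π z * g z ^ 2 := by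
    rw [integral_finset_sum _ (fun z _ => indicator_int _ _ _)]
    refine Finset.sum_congr rfl (fun z _ => ?_)
    rw [indicator_intgl, sub_zero, max_eq_left (sq_nonneg _), mul_comm]
  have hintφ : ∫ t, φ t = ∑ x, ∑ y, max (g x ^ 2 - g y ^ 2) 0 * (π x * P x y) := by
    rw [integral_finset_sum _ (fun x _ => integrable_finset_sum _ (fun y _ => indicator_int _ _ _))]
    refine Finset.sum_congr rfl (fun x _ => ?_)
    rw [integral_finset_sum _ (fun y _ => indicator_int _ _ _)]
    exact Finset.sum_congr rfl (fun y _ => indicator_intgl _ _ _)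
  calc h * ∑ z, π z * g z ^ 2 = ∫ t, h * ψ t := by rw [MeasureTheory.integral_const_mul, hintψ]
    _ ≤ ∫ t, φ t := integral_mono (intψ.const_mul h) intφ key
    _ = _ := hintφ

/-- Cheeger upper bound for reversible chains: h²/2 ≤ 1 − μ₂, where h is the conductance
and μ₂ the second-largest eigenvalue. -/
theorem cheeger_upper {n : ℕ} (P : Matrix (Fin n) (Fin n) ℝ)
    (π : Fin n → ℝ) (hπpos : ∀ i, 0 < π i) (hπsum : ∑ i, π i = 1)
    (hPnn : ∀ i j, 0 ≤ P i j) (hProw : ∀ i, ∑ j, P i j = 1)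
    (hrev : ∀ i j, π i * P i j = π j * P j i)
    (hirr : ∀ i j, ∃ k : ℕ, 0 < (P ^ k) i j)
    (h : ℝ)
    (hcond : IsLeast {x : ℝ | ∃ S : Finset (Fin n), S.Nonempty ∧ (∑ i ∈ S, π i) ≤ 1/2 ∧
      x = (∑ i ∈ S, ∑ j ∈ Sᶜ, π i * P i j) / ∑ i ∈ S, π i} h)
    (μ₂ : ℝ)
    (hμ : IsGreatest {μ : ℝ | (∃ v : Fin n → ℝ, v ≠ 0 ∧ P.mulVec v = μ • v) ∧ μ ≠ 1} μ₂) :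
    h ^ 2 / 2 ≤ 1 - μ₂ := by
  obtain ⟨⟨f₀, hf0ne, hf0eig⟩, hμne⟩ := hμ.1
  have hcol : ∀ y, ∑ x, π x * P x y = π y := fun y => by
    calc ∑ x, π x * P x y = ∑ x, π y * P y x := Finset.sum_congr rfl fun x _ => hrev x y
      _ = π y := by rw [← Finset.mul_sum, hProw, mul_one]
  have hlb : ∀ T : Finset (Fin n), T.Nonempty → (∑ i ∈ T, π i) ≤ 1/2 →
      h * ∑ i ∈ T, π i ≤ ∑ i ∈ T, ∑ j ∈ Tᶜ, π i * P i j := by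
    intro T hTne hThalf
    have hπT : 0 < ∑ i ∈ T, π i := Finset.sum_pos (fun i _ => hπpos i) hTne
    have hmem : (∑ i ∈ T, ∑ j ∈ Tᶜ, π i * P i j) / (∑ i ∈ T, π i) ∈
        {x : ℝ | ∃ S : Finset (Fin n), S.Nonempty ∧ (∑ i ∈ S, π i) ≤ 1/2 ∧
          x = (∑ i ∈ S, ∑ j ∈ Sᶜ, π i * P i j) / ∑ i ∈ S, π i} := ⟨T, hTne, hThalf, rfl⟩
    have hle := hcond.2 hmem
    calc h * ∑ i ∈ T, π i
        ≤ ((∑ i ∈ T, ∑ j ∈ Tᶜ, π i * P i j) / ∑ i ∈ T, π i) * ∑ i ∈ T, π i :=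
          mul_le_mul_of_nonneg_right hle hπT.le
      _ = ∑ i ∈ T, ∑ j ∈ Tᶜ, π i * P i j := div_mul_cancel₀ _ hπT.ne'
  have hh0 : 0 ≤ h := by
    obtain ⟨S₀, hS₀ne, _, hval⟩ := hcond.1
    rw [hval]
    exact div_nonneg (Finset.sum_nonneg fun i _ => Finset.sum_nonneg fun j _ =>
      mul_nonneg (hπpos i).le (hPnn i j)) (Finset.sum_nonneg fun i _ => (hπpos i).le)
  have hsum0 : ∀ f : Fin n → ℝ, P.mulVec f = μ₂ • f → ∑ x, π x * f x = 0 := by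
    intro f hfeig
    have h1 : ∑ x, π x * (P.mulVec f x) = ∑ x, π x * f x := by
      calc ∑ x, π x * (P.mulVec f x) = ∑ x, ∑ y, π x * P x y * f y := by
            refine Finset.sum_congr rfl fun x _ => ?_
            simp only [Matrix.mulVec, dotProduct]
            rw [Finset.mul_sum]
            exact Finset.sum_congr rfl fun y _ => by ring
        _ = ∑ x, π x * f x := sumQ_right π P hcol f
    have h2 : ∑ x, π x * (P.mulVec f x) = μ₂ * ∑ x, π x * f x := by
      rw [hfeig, Finset.mul_sum]
      exact Finset.sum_congr rfl fun x _ => by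
        simp only [Pi.smul_apply, smul_eq_mul]; ring
    have h3 : (1 - μ₂) * ∑ x, π x * f x = 0 := by rw [h2] at h1; linarith
    exact (mul_eq_zero.1 h3).resolve_left (sub_ne_zero.2 (Ne.symm hμne))
  have hpos : ∀ f : Fin n → ℝ, f ≠ 0 → (∑ x, π x * f x = 0) → ∃ x, 0 < f x := by
    intro f hfne hfsum
    by_contra hc
    push_neg at hc
    obtain ⟨z, hz⟩ := Function.ne_iff.1 hfne
    have hzneg : f z < 0 := lt_of_le_of_ne (hc z) hz
    have : ∑ x, π x * f x < 0 :=
      Finset.sum_neg' (fun i _ => mul_nonpos_of_nonneg_of_nonpos (hπpos i).le (hc i))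
        ⟨z, Finset.mem_univ z, mul_neg_of_pos_of_neg (hπpos z) hzneg⟩
    linarith
  suffices key : ∀ f : Fin n → ℝ, P.mulVec f = μ₂ • f → (∃ x, 0 < f x) →
      (∑ i ∈ Finset.univ.filter (fun z => 0 < f z), π i) ≤ 1/2 → h ^ 2 / 2 ≤ 1 - μ₂ by
    have hdisj : Disjoint (Finset.univ.filter (fun z => 0 < f₀ z))
        (Finset.univ.filter (fun z => 0 < (-f₀) z)) := by
      rw [Finset.disjoint_left]
      intro a ha hb
      simp only [Finset.mem_filter, Pi.neg_apply] at ha hb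
      linarith [ha.2, hb.2]
    have hsumAB : (∑ i ∈ Finset.univ.filter (fun z => 0 < f₀ z), π i)
        + (∑ i ∈ Finset.univ.filter (fun z => 0 < (-f₀) z), π i) ≤ 1 := by
      rw [← Finset.sum_union hdisj, ← hπsum]
      exact Finset.sum_le_sum_of_subset_of_nonneg (Finset.subset_univ _)
        (fun i _ _ => (hπpos i).le)
    have hnegeig : P.mulVec (-f₀) = μ₂ • (-f₀) := by
      rw [Matrix.mulVec_neg, hf0eig, smul_neg]
    rcases le_or_gt (∑ i ∈ Finset.univ.filter (fun z => 0 < f₀ z), π i) (1/2) with hA2 | hA2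
    · exact key f₀ hf0eig (hpos f₀ hf0ne (hsum0 f₀ hf0eig)) hA2
    · refine key (-f₀) hnegeig (hpos (-f₀) (neg_ne_zero.2 hf0ne) (hsum0 (-f₀) hnegeig)) ?_
      linarith
  intro f hfeig hfposex hfhalf
  set g : Fin n → ℝ := fun x => max (f x) 0 with hgdef
  have hg0 : ∀ x, 0 ≤ g x := fun x => le_max_right _ _
  have hgf : ∀ x, f x ≤ g x := fun x => le_max_left _ _
  have hgiff : ∀ x, 0 < g x ↔ 0 < f x := fun x => by
    simp [hgdef, lt_max_iff]
  set N := ∑ z, π z * g z ^ 2 with hNdef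
  have hNpos : 0 < N := by
    obtain ⟨x₀, hx₀⟩ := hfposex
    refine Finset.sum_pos' (fun i _ => mul_nonneg (hπpos i).le (sq_nonneg _))
      ⟨x₀, Finset.mem_univ _, mul_pos (hπpos x₀) (pow_pos ((hgiff x₀).2 hx₀) 2)⟩
  have hfiltg : Finset.univ.filter (fun z => 0 < g z)
      = Finset.univ.filter (fun z => 0 < f z) := by
    ext z; simp [hgiff z]
  have hco : h * N ≤ ∑ x, ∑ y, max (g x ^ 2 - g y ^ 2) 0 * (π x * P x y) :=
    coarea π P hπpos hPnn h g hg0 (by rw [hfiltg]; exact hfhalf) hlb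
  set Bq := ∑ x, ∑ y, max (g x ^ 2 - g y ^ 2) 0 * (π x * P x y) with hBqdef
  set A2 := ∑ x, ∑ y, π x * P x y * |g x ^ 2 - g y ^ 2| with hA2def
  have hswap : ∑ x, ∑ y, max (g y ^ 2 - g x ^ 2) 0 * (π x * P x y) = Bq := by
    rw [hBqdef, Finset.sum_comm]
    exact Finset.sum_congr rfl fun y _ => Finset.sum_congr rfl fun x _ => by rw [hrev x y]
  have hA2B : A2 = 2 * Bq := by
    calc A2 = ∑ x, ∑ y, (max (g x ^ 2 - g y ^ 2) 0 * (π x * P x y)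
          + max (g y ^ 2 - g x ^ 2) 0 * (π x * P x y)) := by
          rw [hA2def]
          refine Finset.sum_congr rfl fun x _ => Finset.sum_congr rfl fun y _ => ?_
          rcases le_total (g y ^ 2) (g x ^ 2) with hc | hc
          · rw [abs_of_nonneg (by linarith), max_eq_left (by linarith),
              max_eq_right (by linarith)]; ring
          · rw [abs_of_nonpos (by linarith), max_eq_right (by linarith),
              max_eq_left (by linarith)]; ring
      _ = Bq + Bq := by
          simp only [Finset.sum_add_distrib]
          rw [hswap, hBqdef]
      _ = 2 * Bq := by ring
  set E := ∑ x, ∑ y, π x * P x y * (g x - g y) ^ 2 with hEdef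
  set D := ∑ x, π x * (g x * (g x - P.mulVec g x)) with hDdef
  have hED : E = 2 * D := dirichlet_eq π P hProw hcol g
  have hDbound : D ≤ (1 - μ₂) * N := by
    rw [hDdef, hNdef, Finset.mul_sum]
    refine Finset.sum_le_sum fun x _ => ?_
    by_cases hx : 0 < f x
    · have hgx : g x = f x := max_eq_left hx.le
      have hPg : μ₂ * f x ≤ P.mulVec g x := by
        have hmono : P.mulVec f x ≤ P.mulVec g x := by
          simp only [Matrix.mulVec, dotProduct]
          exact Finset.sum_le_sum fun y _ => mul_le_mul_of_nonneg_left (hgf y) (hPnn x y)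
        have heq : P.mulVec f x = μ₂ * f x := by rw [hfeig]; simp
        linarith
      have h1 : g x * (g x - P.mulVec g x) ≤ (1 - μ₂) * g x ^ 2 := by
        rw [hgx]; nlinarith
      calc π x * (g x * (g x - P.mulVec g x)) ≤ π x * ((1 - μ₂) * g x ^ 2) :=
          mul_le_mul_of_nonneg_left h1 (hπpos x).le
        _ = (1 - μ₂) * (π x * g x ^ 2) := by ring
    · have hgx : g x = 0 := max_eq_right (not_lt.1 hx)
      rw [hgx]; simp
  have hCS : A2 ^ 2 ≤ E * ∑ x, ∑ y, π x * P x y * (g x + g y) ^ 2 := by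
    set u : Fin n × Fin n → ℝ :=
      fun p => Real.sqrt (π p.1 * P p.1 p.2) * |g p.1 - g p.2| with hu
    set v : Fin n × Fin n → ℝ :=
      fun p => Real.sqrt (π p.1 * P p.1 p.2) * (g p.1 + g p.2) with hv
    have h1 : A2 = ∑ p : Fin n × Fin n, u p * v p := by
      rw [hA2def, Fintype.sum_prod_type]
      refine Finset.sum_congr rfl fun x _ => Finset.sum_congr rfl fun y _ => ?_
      have hss : Real.sqrt (π x * P x y) * Real.sqrt (π x * P x y) = π x * P x y :=
        Real.mul_self_sqrt (mul_nonneg (hπpos x).le (hPnn x y))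
      have habs : |g x - g y| * (g x + g y) = |g x ^ 2 - g y ^ 2| := by
        rw [← abs_of_nonneg (add_nonneg (hg0 x) (hg0 y)), ← abs_mul,
          show (g x - g y) * (g x + g y) = g x ^ 2 - g y ^ 2 from by ring]
      show π x * P x y * |g x ^ 2 - g y ^ 2|
          = (Real.sqrt (π x * P x y) * |g x - g y|)
            * (Real.sqrt (π x * P x y) * (g x + g y))
      calc π x * P x y * |g x ^ 2 - g y ^ 2|
          = (Real.sqrt (π x * P x y) * Real.sqrt (π x * P x y))
            * (|g x - g y| * (g x + g y)) := by rw [hss, habs]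
        _ = (Real.sqrt (π x * P x y) * |g x - g y|)
            * (Real.sqrt (π x * P x y) * (g x + g y)) := by ring
    have h2 : ∑ p : Fin n × Fin n, u p ^ 2 = E := by
      rw [hEdef, Fintype.sum_prod_type]
      refine Finset.sum_congr rfl fun x _ => Finset.sum_congr rfl fun y _ => ?_
      show (Real.sqrt (π x * P x y) * |g x - g y|) ^ 2 = π x * P x y * (g x - g y) ^ 2
      rw [mul_pow, Real.sq_sqrt (mul_nonneg (hπpos x).le (hPnn x y)), sq_abs]
    have h3 : ∑ p : Fin n × Fin n, v p ^ 2 = ∑ x, ∑ y, π x * P x y * (g x + g y) ^ 2 := by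
      rw [Fintype.sum_prod_type]
      refine Finset.sum_congr rfl fun x _ => Finset.sum_congr rfl fun y _ => ?_
      show (Real.sqrt (π x * P x y) * (g x + g y)) ^ 2 = π x * P x y * (g x + g y) ^ 2
      rw [mul_pow, Real.sq_sqrt (mul_nonneg (hπpos x).le (hPnn x y))]
    calc A2 ^ 2 = (∑ p : Fin n × Fin n, u p * v p) ^ 2 := by rw [h1]
      _ ≤ (∑ p : Fin n × Fin n, u p ^ 2) * (∑ p : Fin n × Fin n, v p ^ 2) :=
          Finset.sum_mul_sq_le_sq_mul_sq _ _ _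
      _ = E * ∑ x, ∑ y, π x * P x y * (g x + g y) ^ 2 := by rw [h2, h3]
  have hS4 : ∑ x, ∑ y, π x * P x y * (g x + g y) ^ 2 ≤ 4 * N := by
    calc ∑ x, ∑ y, π x * P x y * (g x + g y) ^ 2
        ≤ ∑ x, ∑ y, (2 * (π x * P x y * g x ^ 2) + 2 * (π x * P x y * g y ^ 2)) :=
          Finset.sum_le_sum fun x _ => Finset.sum_le_sum fun y _ => by
            nlinarith [mul_nonneg (mul_nonneg (hπpos x).le (hPnn x y)) (sq_nonneg (g x - g y))]
      _ = 2 * (∑ x, ∑ y, π x * P x y * g x ^ 2) + 2 * (∑ x, ∑ y, π x * P x y * g y ^ 2) := by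
          simp only [Finset.sum_add_distrib, ← Finset.mul_sum]
      _ = 4 * N := by
          rw [sumQ_left π P hProw (fun x => g x ^ 2), sumQ_right π P hcol (fun x => g x ^ 2),
            hNdef]; ring
  have hEnn : 0 ≤ E := Finset.sum_nonneg fun x _ => Finset.sum_nonneg fun y _ =>
    mul_nonneg (mul_nonneg (hπpos x).le (hPnn x y)) (sq_nonneg _)
  have hSnn : 0 ≤ ∑ x, ∑ y, π x * P x y * (g x + g y) ^ 2 :=
    Finset.sum_nonneg fun x _ => Finset.sum_nonneg fun y _ =>
      mul_nonneg (mul_nonneg (hπpos x).le (hPnn x y)) (sq_nonneg _)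
  have hA2ge : 2 * (h * N) ≤ A2 := by rw [hA2B]; linarith
  have hsq : (2 * (h * N)) ^ 2 ≤ A2 ^ 2 :=
    pow_le_pow_left₀ (by positivity) hA2ge 2
  have hfinal : (2 * (h * N)) ^ 2 ≤ (2 * ((1 - μ₂) * N)) * (4 * N) := by
    calc (2 * (h * N)) ^ 2 ≤ A2 ^ 2 := hsq
      _ ≤ E * ∑ x, ∑ y, π x * P x y * (g x + g y) ^ 2 := hCS
      _ ≤ (2 * ((1 - μ₂) * N)) * (4 * N) :=
          mul_le_mul (by linarith) hS4 hSnn (by linarith)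
  nlinarith [hfinal, hNpos, mul_pos hNpos hNpos, sq_nonneg h]
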